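/- arXiv:1801.03810 — 2 statements merged into one kernel-verified Lean document; each statement's English description precedes it below -/
import Mathlib

section
/- (Symmetrization lemma) Let p ≥ 2 and let f, g be non-negative functions in L^p(S¹). Then ∫_{-π}^{π} (f² + g²)^{p/2} dσ ≤ ∫_{-π}^{π} ((f*)² + (g*)²)^{p/2} dσ, where f* and g* denote the symmetric decreasing rearrangements of f and g on the circle. -/
open Real MeasureTheory

/-- `fs` is the symmetric decreasing rearrangement on the circle `(-π, π]` of a
non-negative function `f`: it is even, nonincreasing in `|s|`, and
equidistributed with `f` on `(-π, π]`. -/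
def IsSymmDecrRearrangement (f fs : ℝ → ℝ) : Prop :=
  (∀ s, 0 ≤ fs s)
  ∧ (∀ s, fs (-s) = fs s)
  ∧ (∀ s t, 0 ≤ s → s ≤ t → t ≤ π → fs t ≤ fs s)
  ∧ (∀ c : ℝ, volume {s ∈ Set.Ioc (-π) π | c < f s}
      = volume {s ∈ Set.Ioc (-π) π | c < fs s})

section Helpers
open Set

noncomputable def Ker (q : ℝ) (z : ℝ × ℝ) : ENNReal :=
  ENNReal.ofReal (q*(q-1)*(z.1+z.2)^(q-2))

lemma ker_meas (q : ℝ) : Measurable (Ker q) := by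
  apply Measurable.ennreal_ofReal
  exact measurable_const.mul (Measurable.pow (measurable_fst.add measurable_snd) measurable_const)

lemma L1 (q s b : ℝ) (hs : 0 < s) (hb : 0 ≤ b) :
    ∫ t in (0:ℝ)..b, q*(q-1)*(s+t)^(q-2) = q*(s+b)^(q-1) - q*s^(q-1) := by
  have h : ∀ t ∈ Set.uIcc (0:ℝ) b, HasDerivAt (fun t => q*(s+t)^(q-1))
      (q*(q-1)*(s+t)^(q-2)) t := by
    intro t ht
    have hst : 0 < s + t := by
      rcases Set.mem_uIcc.1 ht with h | h
      · linarith [h.1]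
      · nlinarith [h.1, h.2]
    have h1 : HasDerivAt (fun t => s + t) 1 t := by
      simpa using (hasDerivAt_id t).const_add s
    have h2 := h1.rpow_const (p := q - 1) (Or.inl hst.ne')
    have := h2.const_mul q
    exact this.congr_deriv (by rw [show q - 1 - 1 = q - 2 by ring]; ring)
  have hcont : IntervalIntegrable (fun t => q*(q-1)*(s+t)^(q-2)) volume 0 b := by
    apply ContinuousOn.intervalIntegrable
    apply ContinuousOn.mul continuousOn_const
    apply ContinuousOn.rpow_const (by fun_prop)
    intro t ht
    left
    rcases Set.mem_uIcc.1 ht with h | h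
    · nlinarith [h.1]
    · nlinarith [h.1, h.2]
  simpa using intervalIntegral.integral_eq_sub_of_hasDerivAt h hcont

lemma L2 (q a b : ℝ) (hq : 1 ≤ q) (hb : 0 ≤ b) (ha : 0 ≤ a) :
    ∫ s in (0:ℝ)..a, (q*(s+b)^(q-1) - q*s^(q-1)) = (a+b)^q - a^q - b^q := by
  have h : ∀ s ∈ Set.uIcc (0:ℝ) a, HasDerivAt (fun s => (s+b)^q - s^q)
      (q*(s+b)^(q-1) - q*s^(q-1)) s := by
    intro s hs
    have h1 : HasDerivAt (fun s : ℝ => s + b) 1 s := by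
      simpa using (hasDerivAt_id s).add_const b
    have h2 := h1.rpow_const (p := q) (Or.inr hq)
    have h3 := (hasDerivAt_id s).rpow_const (p := q) (Or.inr hq)
    have := h2.sub h3
    exact this.congr_deriv (by simp)
  have hcont : IntervalIntegrable (fun s => q*(s+b)^(q-1) - q*s^(q-1)) volume 0 a := by
    apply ContinuousOn.intervalIntegrable
    apply ContinuousOn.sub
    · apply ContinuousOn.mul continuousOn_const
      apply ContinuousOn.rpow_const (by fun_prop)
      intro s _; right; linarith
    · apply ContinuousOn.mul continuousOn_const
      apply ContinuousOn.rpow_const (by fun_prop)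
      intro s _; right; linarith
  rw [intervalIntegral.integral_eq_sub_of_hasDerivAt h hcont]
  rw [Real.zero_rpow (by positivity)]
  ring

lemma inner_calc (q s b : ℝ) (hq : 1 ≤ q) (hs : 0 < s) (hb : 0 ≤ b) :
    ∫⁻ t in Set.Ioi (0:ℝ), (Set.Iio b).indicator 1 t * Ker q (s, t)
      = ENNReal.ofReal (q*(s+b)^(q-1) - q*s^(q-1)) := by
  have e1 : ∀ t : ℝ, (Set.Iio b).indicator 1 t * Ker q (s, t)
      = (Set.Iio b).indicator (fun t => Ker q (s, t)) t := by
    intro t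
    by_cases h : t ∈ Set.Iio b <;> simp [Set.indicator_apply, h]
  simp only [e1]
  rw [lintegral_indicator measurableSet_Iio,
    Measure.restrict_restrict measurableSet_Iio, Set.Iio_inter_Ioi]
  have hInt : IntegrableOn (fun t => q*(q-1)*(s+t)^(q-2)) (Set.Ioo 0 b) volume := by
    apply (ContinuousOn.integrableOn_Icc ?_).mono_set Set.Ioo_subset_Icc_self
    apply ContinuousOn.mul continuousOn_const
    apply ContinuousOn.rpow_const (by fun_prop)
    intro t ht; left; nlinarith [ht.1, ht.2]
  have hnn : 0 ≤ᵐ[volume.restrict (Set.Ioo 0 b)] fun t => q*(q-1)*(s+t)^(q-2) := by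
    rw [Filter.EventuallyLE, ae_restrict_iff' measurableSet_Ioo]
    filter_upwards with t ht
    have hst : (0:ℝ) < s + t := by linarith [ht.1]
    have h1 : (0:ℝ) ≤ (s+t)^(q-2) := Real.rpow_nonneg hst.le _
    show (0:ℝ) ≤ q * (q-1) * (s+t)^(q-2)
    exact mul_nonneg (by nlinarith) h1
  rw [show (fun t => Ker q (s, t)) = fun t => ENNReal.ofReal (q*(q-1)*(s+t)^(q-2)) from rfl]
  rw [← ofReal_integral_eq_lintegral_ofReal hInt hnn]
  congr 1
  rw [← MeasureTheory.integral_Ioc_eq_integral_Ioo,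
    ← intervalIntegral.integral_of_le hb]
  exact L1 q s b hs hb

lemma indicator_ne_top (c : ℝ) (x : ℝ) : (Set.Iio c).indicator (1 : ℝ → ENNReal) x ≠ ⊤ := by
  by_cases h : x ∈ Set.Iio c <;> simp [Set.indicator_apply, h]

lemma integrand_meas (q a b : ℝ) :
    Measurable (fun z : ℝ × ℝ => (Set.Iio a).indicator 1 z.1
      * (Set.Iio b).indicator 1 z.2 * Ker q z) :=
  (((measurable_const.indicator measurableSet_Iio).comp measurable_fst).mul
    ((measurable_const.indicator measurableSet_Iio).comp measurable_snd)).mul (ker_meas q)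

lemma Tker_eq (q a b : ℝ) (hq : 1 ≤ q) (ha : 0 ≤ a) (hb : 0 ≤ b) :
    ∫⁻ z in Set.Ioi (0:ℝ) ×ˢ Set.Ioi (0:ℝ),
        (Set.Iio a).indicator 1 z.1 * (Set.Iio b).indicator 1 z.2 * Ker q z
      = ENNReal.ofReal ((a+b)^q - a^q - b^q) := by
  rw [Measure.volume_eq_prod, ← Measure.prod_restrict, lintegral_prod _ (integrand_meas q a b).aemeasurable]
  have step1 : ∀ s : ℝ, (∫⁻ t in Set.Ioi (0:ℝ),
      (Set.Iio a).indicator 1 s * (Set.Iio b).indicator 1 t * Ker q (s, t))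
      = (Set.Iio a).indicator
          (fun s => ∫⁻ t in Set.Ioi (0:ℝ), (Set.Iio b).indicator 1 t * Ker q (s, t)) s := by
    intro s
    simp only [mul_assoc]
    rw [lintegral_const_mul' _ _ (indicator_ne_top a s)]
    by_cases h : s ∈ Set.Iio a <;> simp [Set.indicator_apply, h]
  simp only [step1]
  rw [lintegral_indicator measurableSet_Iio,
    Measure.restrict_restrict measurableSet_Iio, Set.Iio_inter_Ioi]
  rw [setLIntegral_congr_fun measurableSet_Ioo
    (fun s hs => inner_calc q s b hq hs.1 hb)]
  have hInt : IntegrableOn (fun s => q*(s+b)^(q-1) - q*s^(q-1)) (Set.Ioo 0 a) volume := by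
    apply (ContinuousOn.integrableOn_Icc ?_).mono_set Set.Ioo_subset_Icc_self
    apply ContinuousOn.sub
    · apply ContinuousOn.mul continuousOn_const
      apply ContinuousOn.rpow_const (by fun_prop)
      intro s _; right; linarith
    · apply ContinuousOn.mul continuousOn_const
      apply ContinuousOn.rpow_const (by fun_prop)
      intro s _; right; linarith
  have hnn : 0 ≤ᵐ[volume.restrict (Set.Ioo 0 a)] fun s => q*(s+b)^(q-1) - q*s^(q-1) := by
    rw [Filter.EventuallyLE, ae_restrict_iff' measurableSet_Ioo]
    filter_upwards with s hs
    have h1 : s^(q-1) ≤ (s+b)^(q-1) :=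
      Real.rpow_le_rpow hs.1.le (by linarith) (by linarith)
    show (0:ℝ) ≤ q*(s+b)^(q-1) - q*s^(q-1)
    nlinarith
  rw [← ofReal_integral_eq_lintegral_ofReal hInt hnn]
  congr 1
  rw [← MeasureTheory.integral_Ioc_eq_integral_Ioo, ← intervalIntegral.integral_of_le ha]
  exact L2 q a b hq hb ha

lemma pointwise_id (q a b : ℝ) (hq : 1 ≤ q) (ha : 0 ≤ a) (hb : 0 ≤ b) :
    ENNReal.ofReal ((a+b)^q) = ENNReal.ofReal (a^q) + ENNReal.ofReal (b^q)
      + ∫⁻ z in Set.Ioi (0:ℝ) ×ˢ Set.Ioi (0:ℝ),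
          (Set.Iio a).indicator 1 z.1 * (Set.Iio b).indicator 1 z.2 * Ker q z := by
  rw [Tker_eq q a b hq ha hb]
  have hdiff : 0 ≤ (a+b)^q - a^q - b^q := by
    rw [← L2 q a b hq hb ha]
    apply intervalIntegral.integral_nonneg ha
    intro u hu
    have h1 : u^(q-1) ≤ (u+b)^(q-1) :=
      Real.rpow_le_rpow hu.1 (by linarith) (by linarith)
    nlinarith
  rw [← ENNReal.ofReal_add (by positivity) (by positivity),
    ← ENNReal.ofReal_add (by positivity) hdiff]
  congr 1
  ring

lemma tonelli (q : ℝ) (hq : 1 ≤ q) (μ : Measure ℝ) [SigmaFinite μ] (F G : ℝ → ℝ)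
    (hF : Measurable F) (hG : Measurable G) (hF0 : ∀ x, 0 ≤ F x) (hG0 : ∀ x, 0 ≤ G x) :
    ∫⁻ x, ENNReal.ofReal ((F x + G x)^q) ∂μ
      = (∫⁻ x, ENNReal.ofReal (F x^q) ∂μ) + (∫⁻ x, ENNReal.ofReal (G x^q) ∂μ)
        + ∫⁻ z in Set.Ioi (0:ℝ) ×ˢ Set.Ioi (0:ℝ),
            Ker q z * μ {y | z.1 < F y ∧ z.2 < G y} := by
  set ν : Measure (ℝ × ℝ) := volume.restrict (Set.Ioi (0:ℝ) ×ˢ Set.Ioi (0:ℝ)) with hν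
  set H : ℝ → ℝ × ℝ → ENNReal := fun x z =>
    (Set.Iio (F x)).indicator 1 z.1 * (Set.Iio (G x)).indicator 1 z.2 * Ker q z with hH
  have Hm : Measurable (Function.uncurry H) := by
    have h1 : MeasurableSet {p : ℝ × (ℝ × ℝ) | p.2.1 < F p.1} :=
      measurableSet_lt (measurable_snd.fst) (hF.comp measurable_fst)
    have h2 : MeasurableSet {p : ℝ × (ℝ × ℝ) | p.2.2 < G p.1} :=
      measurableSet_lt (measurable_snd.snd) (hG.comp measurable_fst)
    have : Function.uncurry H = fun p : ℝ × (ℝ × ℝ) =>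
        ((if p.2.1 < F p.1 then (1:ENNReal) else 0) * (if p.2.2 < G p.1 then (1:ENNReal) else 0))
          * Ker q p.2 := by
      funext p
      simp [hH, Function.uncurry, Set.indicator_apply]
    rw [this]
    exact ((Measurable.ite h1 measurable_const measurable_const).mul
      (Measurable.ite h2 measurable_const measurable_const)).mul ((ker_meas q).comp measurable_snd)
  have key : ∀ x, ENNReal.ofReal ((F x + G x)^q)
      = ENNReal.ofReal (F x^q) + ENNReal.ofReal (G x^q) + ∫⁻ z, H x z ∂ν := fun x =>
    pointwise_id q (F x) (G x) hq (hF0 x) (hG0 x)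
  calc ∫⁻ x, ENNReal.ofReal ((F x + G x)^q) ∂μ
      = ∫⁻ x, (ENNReal.ofReal (F x^q) + ENNReal.ofReal (G x^q) + ∫⁻ z, H x z ∂ν) ∂μ :=
        lintegral_congr key
    _ = (∫⁻ x, ENNReal.ofReal (F x^q) ∂μ) + (∫⁻ x, ENNReal.ofReal (G x^q) ∂μ)
        + ∫⁻ x, (∫⁻ z, H x z ∂ν) ∂μ := by
        have hW : Measurable fun x => ∫⁻ z, H x z ∂ν := Hm.lintegral_prod_right'
        rw [lintegral_add_right _ hW,
          lintegral_add_left ((hF.pow_const q).ennreal_ofReal)]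
    _ = (∫⁻ x, ENNReal.ofReal (F x^q) ∂μ) + (∫⁻ x, ENNReal.ofReal (G x^q) ∂μ)
        + ∫⁻ z, (∫⁻ x, H x z ∂μ) ∂ν := by
        rw [lintegral_lintegral_swap Hm.aemeasurable]
    _ = (∫⁻ x, ENNReal.ofReal (F x^q) ∂μ) + (∫⁻ x, ENNReal.ofReal (G x^q) ∂μ)
        + ∫⁻ z in Set.Ioi (0:ℝ) ×ˢ Set.Ioi (0:ℝ), Ker q z * μ {y | z.1 < F y ∧ z.2 < G y} := by
        congr 1
        apply lintegral_congr
        intro z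
        have e : ∀ x, H x z = ({y | z.1 < F y ∧ z.2 < G y}).indicator (fun _ => Ker q z) x := by
          intro x
          by_cases h1 : z.1 < F x <;> by_cases h2 : z.2 < G x <;>
            simp [hH, Set.indicator_apply, h1, h2]
        simp only [e]
        have hS : MeasurableSet {y | z.1 < F y ∧ z.2 < G y} :=
          (measurableSet_lt measurable_const hF).inter (measurableSet_lt measurable_const hG)
        rw [lintegral_indicator hS, setLIntegral_const]

lemma equi (μ : Measure ℝ) (p : ℝ) (hp : 0 < p) (f h : ℝ → ℝ) (hf : Measurable f)
    (hh : Measurable h) (hf0 : ∀ x, 0 ≤ f x) (hh0 : ∀ x, 0 ≤ h x)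
    (heq : ∀ c, μ {x | c < f x} = μ {x | c < h x}) :
    ∫⁻ x, ENNReal.ofReal (f x ^ p) ∂μ = ∫⁻ x, ENNReal.ofReal (h x ^ p) ∂μ := by
  rw [lintegral_eq_lintegral_meas_lt μ (Filter.Eventually.of_forall fun x =>
      Real.rpow_nonneg (hf0 x) p) ((hf.pow_const p).aemeasurable),
    lintegral_eq_lintegral_meas_lt μ (Filter.Eventually.of_forall fun x =>
      Real.rpow_nonneg (hh0 x) p) ((hh.pow_const p).aemeasurable)]
  apply setLIntegral_congr_fun measurableSet_Ioi
  intro t ht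
  have e1 : {a | t < f a ^ p} = {a | t ^ p⁻¹ < f a} := by
    ext a
    exact (Real.rpow_inv_lt_iff_of_pos (le_of_lt ht) (hf0 a) hp).symm
  have e2 : {a | t < h a ^ p} = {a | t ^ p⁻¹ < h a} := by
    ext a
    exact (Real.rpow_inv_lt_iff_of_pos (le_of_lt ht) (hh0 a) hp).symm
  beta_reduce
  rw [e1, e2]
  exact heq _

lemma sq_level (c a : ℝ) (hc : 0 ≤ c) (ha : 0 ≤ a) : (c < a^2) ↔ Real.sqrt c < a := by
  rcases ha.eq_or_lt with h | h
  · constructor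
    · intro hlt; nlinarith
    · intro hlt; have := Real.sqrt_nonneg c; nlinarith
  · exact (Real.sqrt_lt' h).symm

lemma total_order (h1 h2 : ℝ → ℝ) (H1 : ∀ x y : ℝ, |x| ≤ |y| → h1 y ≤ h1 x)
    (H2 : ∀ x y : ℝ, |x| ≤ |y| → h2 y ≤ h2 x) (c d : ℝ) :
    {y | c < h1 y} ⊆ {y | d < h2 y} ∨ {y | d < h2 y} ⊆ {y | c < h1 y} := by
  by_cases hAB : {y | c < h1 y} ⊆ {y | d < h2 y}
  · exact Or.inl hAB
  · right
    rw [Set.not_subset] at hAB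
    obtain ⟨a, ha, hanb⟩ := hAB
    intro b hb
    rcases le_total |b| |a| with hba | hba
    · exact lt_of_lt_of_le ha (H1 b a hba)
    · exact absurd (lt_of_lt_of_le hb (H2 a b hba)) hanb

lemma inter_compare (μ : Measure ℝ) (f g h1 h2 : ℝ → ℝ)
    (H1 : ∀ x y : ℝ, |x| ≤ |y| → h1 y ≤ h1 x) (H2 : ∀ x y : ℝ, |x| ≤ |y| → h2 y ≤ h2 x)
    (e1 : ∀ c : ℝ, μ {x | c < f x} = μ {x | c < h1 x})
    (e2 : ∀ c : ℝ, μ {x | c < g x} = μ {x | c < h2 x}) (c d : ℝ) :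
    μ ({y | c < f y} ∩ {y | d < g y}) ≤ μ ({y | c < h1 y} ∩ {y | d < h2 y}) := by
  rcases total_order h1 h2 H1 H2 c d with h | h
  · rw [Set.inter_eq_left.mpr h, ← e1]
    exact measure_mono Set.inter_subset_left
  · rw [Set.inter_eq_right.mpr h, ← e2]
    exact measure_mono Set.inter_subset_right

lemma repr_exists (fs : ℝ → ℝ) (hfs0 : ∀ s, 0 ≤ fs s) (hfsev : ∀ s, fs (-s) = fs s)
    (hfsmono : ∀ s t, 0 ≤ s → s ≤ t → t ≤ π → fs t ≤ fs s) :
    ∃ h : ℝ → ℝ, Measurable h ∧ (∀ x, 0 ≤ h x) ∧ (∀ x y : ℝ, |x| ≤ |y| → h y ≤ h x)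
      ∧ (∀ x ∈ Set.Icc (-π) π, h x = fs x) := by
  have hA : Antitone (fun u : ℝ => fs (min (max u 0) π)) := by
    intro u v huv
    exact hfsmono _ _ (le_min (le_max_right _ _) Real.pi_pos.le)
      (min_le_min (max_le_max huv le_rfl) le_rfl) (min_le_right _ _)
  refine ⟨fun x => fs (min (max |x| 0) π), hA.measurable.comp measurable_abs,
    fun x => hfs0 _, fun x y hxy => hA hxy, ?_⟩
  intro x hx
  have h1 : max |x| 0 = |x| := max_eq_left (abs_nonneg x)
  have h2 : min |x| π = |x| := min_eq_left (abs_le.mpr ⟨hx.1, hx.2⟩)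
  simp only [h1, h2]
  rcases le_or_gt 0 x with h | h
  · rw [abs_of_nonneg h]
  · rw [abs_of_neg h, hfsev x]

lemma level_transfer (f fs h : ℝ → ℝ) (hag : ∀ x ∈ Set.Icc (-π) π, h x = fs x)
    (hfseq : ∀ c : ℝ, volume {s ∈ Set.Ioc (-π) π | c < f s}
      = volume {s ∈ Set.Ioc (-π) π | c < fs s}) (c : ℝ) :
    (volume.restrict (Set.Ioc (-π) π)) {x | c < f x}
      = (volume.restrict (Set.Ioc (-π) π)) {x | c < h x} := by
  rw [Measure.restrict_apply' measurableSet_Ioc, Measure.restrict_apply' measurableSet_Ioc]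
  have e1 : {x | c < f x} ∩ Set.Ioc (-π) π = {s ∈ Set.Ioc (-π) π | c < f s} := by
    ext x; simp only [Set.mem_inter_iff, Set.mem_setOf_eq]; tauto
  have e2 : {x | c < h x} ∩ Set.Ioc (-π) π = {s ∈ Set.Ioc (-π) π | c < fs s} := by
    ext x
    simp only [Set.mem_inter_iff, Set.mem_setOf_eq]
    constructor
    · rintro ⟨hx, hm⟩; exact ⟨hm, by rwa [← hag x (Set.Ioc_subset_Icc_self hm)]⟩
    · rintro ⟨hm, hx⟩; exact ⟨by rwa [hag x (Set.Ioc_subset_Icc_self hm)], hm⟩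
  rw [e1, e2, hfseq]

theorem symmetrization_lemma' (p : ℝ) (hp : 2 ≤ p)
    (f g fs gs : ℝ → ℝ) (hf : Measurable f) (hg : Measurable g)
    (hf0 : ∀ s, 0 ≤ f s) (hg0 : ∀ s, 0 ≤ g s)
    (hfs0 : ∀ s, 0 ≤ fs s) (hfsev : ∀ s, fs (-s) = fs s)
    (hfsmono : ∀ s t, 0 ≤ s → s ≤ t → t ≤ π → fs t ≤ fs s)
    (hfseq : ∀ c : ℝ, volume {s ∈ Set.Ioc (-π) π | c < f s}
      = volume {s ∈ Set.Ioc (-π) π | c < fs s})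
    (hgs0 : ∀ s, 0 ≤ gs s) (hgsev : ∀ s, gs (-s) = gs s)
    (hgsmono : ∀ s t, 0 ≤ s → s ≤ t → t ≤ π → gs t ≤ gs s)
    (hgseq : ∀ c : ℝ, volume {s ∈ Set.Ioc (-π) π | c < g s}
      = volume {s ∈ Set.Ioc (-π) π | c < gs s}) :
    (1 / (2 * π)) * ∫ s in (-π)..π, (f s ^ 2 + g s ^ 2) ^ (p / 2)
      ≤ (1 / (2 * π)) * ∫ s in (-π)..π, (fs s ^ 2 + gs s ^ 2) ^ (p / 2) := by
  have hπ : 0 < π := Real.pi_pos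
  have h2π : -π ≤ π := by linarith
  set μ : Measure ℝ := volume.restrict (Set.Ioc (-π) π) with hμdef
  set q : ℝ := p / 2 with hqdef
  have hq : 1 ≤ q := by rw [hqdef]; linarith
  have hp0 : 0 < p := by linarith
  obtain ⟨fr, hfrm, hfr0, hfrd, hfrag⟩ := repr_exists fs hfs0 hfsev hfsmono
  obtain ⟨gr, hgrm, hgr0, hgrd, hgrag⟩ := repr_exists gs hgs0 hgsev hgsmono
  have lev1 : ∀ c : ℝ, μ {x | c < f x} = μ {x | c < fr x} :=
    level_transfer f fs fr hfrag hfseq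
  have lev2 : ∀ c : ℝ, μ {x | c < g x} = μ {x | c < gr x} :=
    level_transfer g gs gr hgrag hgseq
  -- measurability of the two integrands
  have mL : Measurable fun s => (f s ^ 2 + g s ^ 2) ^ q :=
    ((hf.pow_const 2).add (hg.pow_const 2)).pow_const q
  have mR : Measurable fun s => (fr s ^ 2 + gr s ^ 2) ^ q :=
    ((hfrm.pow_const 2).add (hgrm.pow_const 2)).pow_const q
  -- the two lintegrals
  set L : ENNReal := ∫⁻ x, ENNReal.ofReal ((f x ^ 2 + g x ^ 2) ^ q) ∂μ with hL
  set R : ENNReal := ∫⁻ x, ENNReal.ofReal ((fr x ^ 2 + gr x ^ 2) ^ q) ∂μ with hR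
  -- core inequality
  have rw2q : ∀ a : ℝ, 0 ≤ a → ((a ^ 2 : ℝ)) ^ q = a ^ p := by
    intro a ha
    rw [← Real.rpow_natCast a 2, ← Real.rpow_mul ha]
    norm_num
    rw [hqdef]; ring_nf
  have core : L ≤ R := by
    rw [hL, hR,
      tonelli q hq μ (fun x => f x ^ 2) (fun x => g x ^ 2) (hf.pow_const 2) (hg.pow_const 2)
        (fun x => sq_nonneg _) (fun x => sq_nonneg _),
      tonelli q hq μ (fun x => fr x ^ 2) (fun x => gr x ^ 2) (hfrm.pow_const 2) (hgrm.pow_const 2)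
        (fun x => sq_nonneg _) (fun x => sq_nonneg _)]
    have c1 : (∫⁻ x, ENNReal.ofReal ((f x ^ 2) ^ q) ∂μ) = ∫⁻ x, ENNReal.ofReal (f x ^ p) ∂μ :=
      lintegral_congr fun x => by rw [rw2q (f x) (hf0 x)]
    have c2 : (∫⁻ x, ENNReal.ofReal ((fr x ^ 2) ^ q) ∂μ) = ∫⁻ x, ENNReal.ofReal (fr x ^ p) ∂μ :=
      lintegral_congr fun x => by rw [rw2q (fr x) (hfr0 x)]
    have c3 : (∫⁻ x, ENNReal.ofReal ((g x ^ 2) ^ q) ∂μ) = ∫⁻ x, ENNReal.ofReal (g x ^ p) ∂μ :=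
      lintegral_congr fun x => by rw [rw2q (g x) (hg0 x)]
    have c4 : (∫⁻ x, ENNReal.ofReal ((gr x ^ 2) ^ q) ∂μ) = ∫⁻ x, ENNReal.ofReal (gr x ^ p) ∂μ :=
      lintegral_congr fun x => by rw [rw2q (gr x) (hgr0 x)]
    have t1 : (∫⁻ x, ENNReal.ofReal ((f x ^ 2) ^ q) ∂μ)
        = ∫⁻ x, ENNReal.ofReal ((fr x ^ 2) ^ q) ∂μ :=
      c1.trans ((equi μ p hp0 f fr hf hfrm hf0 hfr0 lev1).trans c2.symm)
    have t2 : (∫⁻ x, ENNReal.ofReal ((g x ^ 2) ^ q) ∂μ)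
        = ∫⁻ x, ENNReal.ofReal ((gr x ^ 2) ^ q) ∂μ :=
      c3.trans ((equi μ p hp0 g gr hg hgrm hg0 hgr0 lev2).trans c4.symm)
    rw [t1, t2]
    apply add_le_add_right
    apply lintegral_mono_ae
    rw [ae_restrict_iff' (measurableSet_Ioi.prod measurableSet_Ioi)]
    filter_upwards with z hz
    obtain ⟨hz1, hz2⟩ := hz
    apply mul_le_mul_right
    have e1 : {y | z.1 < f y ^ 2 ∧ z.2 < g y ^ 2}
        = {y | Real.sqrt z.1 < f y} ∩ {y | Real.sqrt z.2 < g y} := by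
      ext y
      simp only [Set.mem_inter_iff, Set.mem_setOf_eq]
      rw [sq_level z.1 (f y) (le_of_lt hz1) (hf0 y), sq_level z.2 (g y) (le_of_lt hz2) (hg0 y)]
    have e2 : {y | z.1 < fr y ^ 2 ∧ z.2 < gr y ^ 2}
        = {y | Real.sqrt z.1 < fr y} ∩ {y | Real.sqrt z.2 < gr y} := by
      ext y
      simp only [Set.mem_inter_iff, Set.mem_setOf_eq]
      rw [sq_level z.1 (fr y) (le_of_lt hz1) (hfr0 y), sq_level z.2 (gr y) (le_of_lt hz2) (hgr0 y)]
    rw [e1, e2]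
    exact inter_compare μ f g fr gr hfrd hgrd lev1 lev2 _ _
  -- finiteness of R
  have hRtop : R ≠ ⊤ := by
    have hbound : R ≤ ENNReal.ofReal ((fr 0 ^ 2 + gr 0 ^ 2) ^ q) * μ Set.univ := by
      rw [hR, ← lintegral_const]
      apply lintegral_mono
      intro x
      apply ENNReal.ofReal_le_ofReal
      apply Real.rpow_le_rpow (by positivity) _ (by linarith)
      have h1 : fr x ≤ fr 0 := hfrd 0 x (by simp)
      have h2 : gr x ≤ gr 0 := hgrd 0 x (by simp)
      nlinarith [hfr0 x, hgr0 x]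
    refine ne_top_of_le_ne_top ?_ hbound
    apply ENNReal.mul_ne_top ENNReal.ofReal_ne_top
    rw [hμdef, Measure.restrict_apply_univ, Real.volume_Ioc]
    exact ENNReal.ofReal_ne_top
  -- convert interval integrals
  rw [intervalIntegral.integral_of_le h2π, intervalIntegral.integral_of_le h2π]
  rw [show (∫ x in Set.Ioc (-π) π, (fs x ^ 2 + gs x ^ 2) ^ q)
      = ∫ x in Set.Ioc (-π) π, (fr x ^ 2 + gr x ^ 2) ^ q from
    setIntegral_congr_fun measurableSet_Ioc (fun x hx => by
      have hx' := Set.Ioc_subset_Icc_self hx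
      show (fs x ^ 2 + gs x ^ 2) ^ q = (fr x ^ 2 + gr x ^ 2) ^ q
      rw [hfrag x hx', hgrag x hx'])]
  rw [integral_eq_lintegral_of_nonneg_ae
      (Filter.Eventually.of_forall fun x => Real.rpow_nonneg (by positivity) q)
      mL.aestronglyMeasurable.restrict,
    integral_eq_lintegral_of_nonneg_ae
      (Filter.Eventually.of_forall fun x => Real.rpow_nonneg (by positivity) q)
      mR.aestronglyMeasurable.restrict]
  apply mul_le_mul_of_nonneg_left _ (by positivity)
  exact ENNReal.toReal_mono hRtop core

end Helpers

/-- symmetrization lemma: for `p ≥ 2` and non-negative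
`f, g ∈ L^p(S¹)`, `∫ (f²+g²)^{p/2} dσ ≤ ∫ ((f*)²+(g*)²)^{p/2} dσ`. -/
theorem symmetrization_lemma (p : ℝ) (hp : 2 ≤ p)
    (f g fs gs : ℝ → ℝ) (hf : Measurable f) (hg : Measurable g)
    (hf0 : ∀ s, 0 ≤ f s) (hg0 : ∀ s, 0 ≤ g s)
    (hfLp : IntervalIntegrable (fun s => f s ^ p) volume (-π) π)
    (hgLp : IntervalIntegrable (fun s => g s ^ p) volume (-π) π)
    (hfs : IsSymmDecrRearrangement f fs) (hgs : IsSymmDecrRearrangement g gs) :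
    (1 / (2 * π)) * ∫ s in (-π)..π, (f s ^ 2 + g s ^ 2) ^ (p / 2)
      ≤ (1 / (2 * π)) * ∫ s in (-π)..π, (fs s ^ 2 + gs s ^ 2) ^ (p / 2) := by
  obtain ⟨hfs0, hfsev, hfsmono, hfseq⟩ := hfs
  obtain ⟨hgs0, hgsev, hgsmono, hgseq⟩ := hgs
  exact symmetrization_lemma' p hp f g fs gs hf hg hf0 hg0
    hfs0 hfsev hfsmono hfseq hgs0 hgsev hgsmono hgseq
end

section
/- (Wronskian rigidity) Let p > 2, α ∈ ℝ, and let v₁, v₂: ℝ → ℝ be C² functions both satisfying -v_j'' + α v_j = (v₁² + v₂²)^{p/2 - 1} v_j on ℝ. Then the Wronskian w = v₁ v₂' - v₁' v₂ is constant. Moreover, if v₁ and v₂ both vanish at some common point and are not identically zero, then w ≡ 0 and v₁, v₂ are linearly dependent. -/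
open Real
open scoped NNReal

/-- Uniqueness for the linear second-order ODE `u'' = g u` with zero initial data. -/
lemma ode_unique_zero (g u : ℝ → ℝ) (hg : Continuous g) (hu : ContDiff ℝ 2 u)
    (hode : ∀ s, deriv (deriv u) s = g s * u s) (s₀ : ℝ)
    (h0 : u s₀ = 0) (h1 : deriv u s₀ = 0) : ∀ s, u s = 0 := by
  have hud : Differentiable ℝ u := hu.differentiable (by norm_num)
  have hud' : Differentiable ℝ (deriv u) := by
    have := (contDiff_succ_iff_deriv (n := 1)).mp (by exact_mod_cast hu)
    exact this.2.2.differentiable one_ne_zero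
  intro s
  set a : ℝ := min s s₀ - 1 with ha_def
  set b : ℝ := max s s₀ + 1 with hb_def
  have has : a < s₀ := by
    have := min_le_right s s₀; simp only [ha_def]; linarith
  have hbs : s₀ < b := by
    have := le_max_right s s₀; simp only [hb_def]; linarith
  have hsab : s ∈ Set.Icc a b := by
    constructor
    · have := min_le_left s s₀; simp only [ha_def]; linarith
    · have := le_max_left s s₀; simp only [hb_def]; linarith
  obtain ⟨C, hC⟩ := (isCompact_Icc (a := a) (b := b)).exists_bound_of_continuousOn
    hg.continuousOn
  set cl : ℝ → ℝ := fun t => min b (max a t) with hcl_def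
  have hclmem : ∀ t, cl t ∈ Set.Icc a b := by
    intro t
    exact ⟨le_min (le_of_lt (lt_trans has hbs)) (le_max_left a t), min_le_left _ _⟩
  have hclid : ∀ t ∈ Set.Icc a b, cl t = t := by
    intro t ht
    simp only [hcl_def]
    rw [max_eq_right ht.1, min_eq_right ht.2]
  have hgC : ∀ t, |g (cl t)| ≤ C := fun t => hC _ (hclmem t)
  set K : ℝ≥0 := 1 + C.toNNReal with hK_def
  set V : ℝ → ℝ × ℝ → ℝ × ℝ := fun t y => (y.2, g (cl t) * y.1) with hV_def
  have hLip : ∀ t, LipschitzWith K (V t) := by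
    intro t
    have h2 : LipschitzWith C.toNNReal (fun y : ℝ × ℝ => g (cl t) * y.1) := by
      apply LipschitzWith.of_dist_le_mul
      intro x y
      simp only [Real.dist_eq]
      rw [← mul_sub, abs_mul]
      have h3 : |x.1 - y.1| ≤ dist x y := by
        rw [Prod.dist_eq]; exact le_trans (le_of_eq (Real.dist_eq _ _).symm) (le_max_left _ _)
      have hCC : (C.toNNReal : ℝ) = C := Real.coe_toNNReal _ (le_trans (abs_nonneg _) (hgC t))
      rw [hCC]
      calc |g (cl t)| * |x.1 - y.1| ≤ C * |x.1 - y.1| :=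
            mul_le_mul_of_nonneg_right (hgC t) (abs_nonneg _)
        _ ≤ C * dist x y := by
            apply mul_le_mul_of_nonneg_left h3 (le_trans (abs_nonneg _) (hgC t))
    have h1' : LipschitzWith 1 (fun y : ℝ × ℝ => y.2) := LipschitzWith.prod_snd
    have := h1'.prodMk h2
    exact this.weaken (by simp [hK_def, max_le_iff])
  set F : ℝ → ℝ × ℝ := fun t => (u t, deriv u t) with hF_def
  have hF' : ∀ t ∈ Set.Ioo a b, HasDerivAt F (V t (F t)) t := by
    intro t ht
    have hd : HasDerivAt F (deriv u t, deriv (deriv u) t) t :=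
      ((hud t).hasDerivAt).prodMk ((hud' t).hasDerivAt)
    have : V t (F t) = (deriv u t, deriv (deriv u) t) := by
      simp only [hV_def, hF_def, hclid t (Set.mem_Icc_of_Ioo ht), hode t]
    rw [this]
    exact hd
  have hG' : ∀ t ∈ Set.Ioo a b, HasDerivAt (fun _ : ℝ => (0 : ℝ × ℝ)) (V t 0) t := by
    intro t _
    have : V t 0 = 0 := by simp [hV_def]
    rw [this]
    exact hasDerivAt_const _ _
  have heq : Set.EqOn F (fun _ => (0 : ℝ × ℝ)) (Set.Icc a b) := by
    apply ODE_solution_unique_of_mem_Icc (v := V) (s := fun _ => Set.univ)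
      (fun t _ => (hLip t).lipschitzOnWith) ⟨has, hbs⟩
      ((hud.continuous.prodMk hud'.continuous).continuousOn)
      hF' (fun _ _ => Set.mem_univ _) continuousOn_const hG' (fun _ _ => Set.mem_univ _)
    simp [hF_def, h0, h1, Prod.ext_iff]
  have h2 := heq hsab
  exact congrArg Prod.fst h2

/-- Wronskian rigidity: if `v₁, v₂` are `C²` solutions of the same
semilinear ODE `-v'' + α v = (v₁²+v₂²)^{p/2-1} v`, then the Wronskian
`w = v₁ v₂' - v₁' v₂` is constant; if moreover `v₁, v₂` vanish at a common point
and are not identically zero, then `w ≡ 0` and `v₁, v₂` are linearly dependent. -/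
theorem wronskian_rigidity (p α : ℝ) (hp : 2 < p) (v₁ v₂ : ℝ → ℝ)
    (hv₁ : ContDiff ℝ 2 v₁) (hv₂ : ContDiff ℝ 2 v₂)
    (hode₁ : ∀ s : ℝ, -(deriv (deriv v₁) s) + α * v₁ s
      = ((v₁ s) ^ 2 + (v₂ s) ^ 2) ^ (p / 2 - 1) * v₁ s)
    (hode₂ : ∀ s : ℝ, -(deriv (deriv v₂) s) + α * v₂ s
      = ((v₁ s) ^ 2 + (v₂ s) ^ 2) ^ (p / 2 - 1) * v₂ s) :
    (∃ c : ℝ, ∀ s : ℝ, v₁ s * deriv v₂ s - deriv v₁ s * v₂ s = c)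
    ∧ ((∃ s₀ : ℝ, v₁ s₀ = 0 ∧ v₂ s₀ = 0) → v₁ ≠ 0 → v₂ ≠ 0 →
      (∀ s : ℝ, v₁ s * deriv v₂ s - deriv v₁ s * v₂ s = 0)
      ∧ ∃ c₁ c₂ : ℝ, (c₁, c₂) ≠ (0, 0) ∧ ∀ s : ℝ, c₁ * v₁ s + c₂ * v₂ s = 0) := by
  have hv₁d : Differentiable ℝ v₁ := hv₁.differentiable (by norm_num)
  have hv₂d : Differentiable ℝ v₂ := hv₂.differentiable (by norm_num)
  have hv₁d' : Differentiable ℝ (deriv v₁) := by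
    have := (contDiff_succ_iff_deriv (n := 1)).mp (by exact_mod_cast hv₁)
    exact this.2.2.differentiable one_ne_zero
  have hv₂d' : Differentiable ℝ (deriv v₂) := by
    have := (contDiff_succ_iff_deriv (n := 1)).mp (by exact_mod_cast hv₂)
    exact this.2.2.differentiable one_ne_zero
  set g : ℝ → ℝ := fun s => α - ((v₁ s) ^ 2 + (v₂ s) ^ 2) ^ (p / 2 - 1) with hg_def
  have hode₁' : ∀ s, deriv (deriv v₁) s = g s * v₁ s := by
    intro s
    have h := hode₁ s
    have h2 : deriv (deriv v₁) s
        = α * v₁ s - ((v₁ s) ^ 2 + (v₂ s) ^ 2) ^ (p / 2 - 1) * v₁ s := by linarith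
    rw [h2, hg_def]; ring
  have hode₂' : ∀ s, deriv (deriv v₂) s = g s * v₂ s := by
    intro s
    have h := hode₂ s
    have h2 : deriv (deriv v₂) s
        = α * v₂ s - ((v₁ s) ^ 2 + (v₂ s) ^ 2) ^ (p / 2 - 1) * v₂ s := by linarith
    rw [h2, hg_def]; ring
  have hgcont : Continuous g := by
    apply continuous_const.sub
    apply Continuous.rpow_const
    · exact ((hv₁d.continuous.pow 2).add (hv₂d.continuous.pow 2))
    · intro x; right; linarith
  -- Wronskian has zero derivative
  set w : ℝ → ℝ := fun s => v₁ s * deriv v₂ s - deriv v₁ s * v₂ s with hw_def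
  have hwderiv : ∀ s, HasDerivAt w 0 s := by
    intro s
    have h := (((hv₁d s).hasDerivAt.mul (hv₂d' s).hasDerivAt).sub
      ((hv₁d' s).hasDerivAt.mul (hv₂d s).hasDerivAt))
    have hval : deriv v₁ s * deriv v₂ s + v₁ s * deriv (deriv v₂) s -
        (deriv (deriv v₁) s * v₂ s + deriv v₁ s * deriv v₂ s) = 0 := by
      rw [hode₁' s, hode₂' s]; ring
    rw [hval] at h
    rw [hw_def]
    exact h
  have hwconst : ∀ s, w s = w 0 := by
    intro s
    have : ∀ x y : ℝ, w x = w y := by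
      intro x y
      apply is_const_of_deriv_eq_zero (fun t => (hwderiv t).differentiableAt)
      intro t; exact (hwderiv t).deriv
    exact this s 0
  refine ⟨⟨w 0, fun s => hwconst s⟩, ?_⟩
  rintro ⟨s₀, h₁0, h₂0⟩ hv₁ne hv₂ne
  have hd₁ : deriv v₁ s₀ ≠ 0 := by
    intro h
    apply hv₁ne
    funext s
    exact ode_unique_zero g v₁ hgcont hv₁ hode₁' s₀ h₁0 h s
  have hd₂ : deriv v₂ s₀ ≠ 0 := by
    intro h
    apply hv₂ne
    funext s
    exact ode_unique_zero g v₂ hgcont hv₂ hode₂' s₀ h₂0 h s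
  have hw0 : w 0 = 0 := by
    have h := hwconst s₀
    simp only [hw_def, h₁0, h₂0, zero_mul, mul_zero, sub_zero, zero_sub, neg_zero] at h ⊢
    linarith
  constructor
  · intro s
    have h := hwconst s
    rw [hw0] at h
    simpa [hw_def] using h
  · refine ⟨deriv v₂ s₀, -(deriv v₁ s₀), ?_, ?_⟩
    · simp [Prod.ext_iff, hd₂]
    · intro s
      set c₁ := deriv v₂ s₀ with hc₁
      set c₂ := -(deriv v₁ s₀) with hc₂
      set uu : ℝ → ℝ := fun s => c₁ * v₁ s + c₂ * v₂ s with huu_def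
      have huc : ContDiff ℝ 2 uu := (hv₁.const_smul c₁).add (hv₂.const_smul c₂)
      have hud : deriv uu = fun s => c₁ * deriv v₁ s + c₂ * deriv v₂ s := by
        funext s
        rw [huu_def]
        rw [deriv_fun_add ((hv₁d s).const_mul c₁) ((hv₂d s).const_mul c₂),
          deriv_const_mul c₁ (hv₁d s), deriv_const_mul c₂ (hv₂d s)]
      have hode_u : ∀ s, deriv (deriv uu) s = g s * uu s := by
        intro s
        rw [hud]
        rw [deriv_fun_add ((hv₁d' s).const_mul c₁) ((hv₂d' s).const_mul c₂),
          deriv_const_mul c₁ (hv₁d' s), deriv_const_mul c₂ (hv₂d' s),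
          hode₁' s, hode₂' s, huu_def]
        ring
      have hu0 : uu s₀ = 0 := by simp [huu_def, h₁0, h₂0]
      have hu1 : deriv uu s₀ = 0 := by
        rw [hud]
        show c₁ * deriv v₁ s₀ + c₂ * deriv v₂ s₀ = 0
        rw [hc₁, hc₂]; ring
      exact ode_unique_zero g uu hgcont huc hode_u s₀ hu0 hu1 s
end
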